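/- Let p ≥ 7 be a prime, n = (p-1)/2, ζ a primitive p-th root of unity in ℂ, K = ℚ(ζ + ζ^{-1}), e_j = ζ^j + ζ^{-j}, and α = 2 - e_1. Define f_i = Σ_{j=i}^{n} e_j for 1 ≤ i ≤ n. Then f_1, …, f_n is a ℤ-basis of O_K = ℤ[ζ + ζ^{-1}] and Tr_{K/ℚ}(α f_i f_l) = p if i = l, and Tr_{K/ℚ}(α f_i f_l) = 0 if i ≠ l. Equivalently, the lattice (1/√p)·σ_α(O_K) is a rotated (isometric) copy of ℤ^n. -/

import Mathlib

open scoped IntermediateField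

private lemma telescope_aux (z w : ℂ) (hzw : z * w = 1) (a b : ℕ) (hab : a ≤ b) :
    (1 - z) * ∑ j ∈ Finset.Icc (a+1) b, (z ^ j + w ^ j) =
      z ^ (a+1) - z ^ (b+1) + w ^ b - w ^ a := by
  induction b, hab using Nat.le_induction with
  | base => rw [Finset.Icc_eq_empty (by omega)]; simp
  | succ b hb ih =>
      rw [Finset.sum_Icc_succ_top (by omega)]
      linear_combination ih - w^b * hzw

private lemma telescope (n : ℕ) (z w : ℂ) (hzw : z * w = 1) (hz : z ^ (2*n+1) = 1)
    (a : ℕ) (ha : a ≤ n) :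
    (1 - z) * ∑ j ∈ Finset.Icc (a+1) n, (z ^ j + w ^ j) = z ^ (a+1) - w ^ a := by
  rw [telescope_aux z w hzw a n ha]
  have h1 : z ^ (n+1) = w ^ n := by
    calc z^(n+1) = z^(n+1) * (z^n * w^n) := by rw [← mul_pow, hzw, one_pow, mul_one]
    _ = (z^(2*n+1)) * w^n := by ring
    _ = w^n := by rw [hz, one_mul]
  rw [h1]; ring

set_option maxHeartbeats 2000000 in
set_option synthInstance.maxHeartbeats 400000 in
/-- With `K = ℚ(ζ + ζ⁻¹)` for `ζ` a primitive `p`-th root of unity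
(`p ≥ 7` prime), `n = (p-1)/2`, `α = 2 - e₁` and `fᵢ = Σ_{j=i}^{n} eⱼ`
(`1 ≤ i ≤ n`, `0`-indexed below), the family `f` is a `ℤ`-basis of
`O_K = ℤ[ζ + ζ⁻¹]` and `Tr(α fᵢ fₗ) = p` if `i = l` and `0` otherwise:
the lattice `(1/√p)·σ_α(O_K)` is a rotated copy of `ℤⁿ`. -/
theorem rotated_Zn_odd_prime
    (p n : ℕ) (hp : p.Prime) (hp7 : 7 ≤ p) (hn : p = 2 * n + 1)
    (ζ : ℂ) (hζ : IsPrimitiveRoot ζ p)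
    (ξ : ℚ⟮ζ + ζ⁻¹⟯) (hξ : (ξ : ℂ) = ζ + ζ⁻¹)
    (e : ℕ → ℚ⟮ζ + ζ⁻¹⟯)
    (he : ∀ j : ℕ, 1 ≤ j → ((e j : ℂ) = ζ ^ j + ζ⁻¹ ^ j))
    (α : ℚ⟮ζ + ζ⁻¹⟯) (hα : α = 2 - e 1)
    (f : Fin n → ℚ⟮ζ + ζ⁻¹⟯)
    (hf : ∀ k : Fin n, f k = ∑ j ∈ Finset.Icc ((k : ℕ) + 1) n, e j) :
    LinearIndependent ℤ f ∧
    Submodule.span ℤ (Set.range f) =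
      Subalgebra.toSubmodule (Algebra.adjoin ℤ ({ξ} : Set ℚ⟮ζ + ζ⁻¹⟯)) ∧
    ∀ i l : Fin n, Algebra.trace ℚ ℚ⟮ζ + ζ⁻¹⟯ (α * f i * f l) =
      if i = l then (p : ℚ) else 0 := by
  have hn3 : 3 ≤ n := by omega
  have hppos : 0 < p := by omega
  set pp : ℕ+ := ⟨p, hppos⟩ with hpp
  have hζ' : IsPrimitiveRoot ζ (pp : ℕ) := hζ
  have hζ0 : ζ ≠ 0 := hζ.ne_zero (by omega)
  have hu : ζ * ζ⁻¹ = 1 := mul_inv_cancel₀ hζ0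
  have huk : ∀ a : ℕ, ζ ^ a * ζ⁻¹ ^ a = 1 := fun a => by rw [← mul_pow, hu, one_pow]
  have hzp : ζ ^ p = 1 := hζ.pow_eq_one
  have hzp' : ζ ^ (2 * n + 1) = 1 := by rw [← hn]; exact hzp
  have hζ1 : ζ ≠ 1 := hζ.ne_one (by omega)
  have coeinj : ∀ x y : ℚ⟮ζ + ζ⁻¹⟯, (x : ℂ) = (y : ℂ) → x = y :=
    fun x y h => Subtype.coe_injective h
  -- ℂ-description of f
  have hfC : ∀ k : Fin n, (f k : ℂ) = ∑ j ∈ Finset.Icc ((k : ℕ) + 1) n, (ζ ^ j + ζ⁻¹ ^ j) := by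
    intro k
    rw [hf k]
    push_cast
    refine Finset.sum_congr rfl fun j hj => he j ?_
    simp only [Finset.mem_Icc] at hj
    omega
  ---------------------------------------------------------------
  -- The cyclotomic field L = ℚ(ζ) and the trace machinery
  ---------------------------------------------------------------
  have hint : IsIntegral ℚ ζ := (hζ.isIntegral hppos).tower_top
  set L : IntermediateField ℚ ℂ := ℚ⟮ζ⟯ with hL
  have toSub : L.toSubalgebra = Algebra.adjoin ℚ {ζ} :=
    IntermediateField.adjoin_simple_toSubalgebra_of_isAlgebraic hint.isAlgebraic
  haveI instCyc : IsCyclotomicExtension {(pp : ℕ)} ℚ L := by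
    refine IsCyclotomicExtension.equiv _ _ _ (h := ?_) (.refl : L.toSubalgebra ≃ₐ[ℚ] _)
    rw [toSub]
    exact hζ'.adjoin_isCyclotomicExtension ℚ
  set zL : L := IntermediateField.AdjoinSimple.gen ℚ ζ with hzLdef
  have hzL : IsPrimitiveRoot zL (pp : ℕ) := by
    rwa [← IsPrimitiveRoot.coe_submonoidClass_iff]
  have hTrL : ∀ a : ℕ, 1 ≤ a → a ≤ 2 * n → Algebra.trace ℚ L (zL ^ a) = -1 := by
    intro a ha1 ha2
    have hcop : a.Coprime p := Nat.Coprime.symm <|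
      (Nat.Prime.coprime_iff_not_dvd hp).mpr (fun hdvd => by
        have := Nat.le_of_dvd (by omega) hdvd; omega)
    have hprim : IsPrimitiveRoot (zL ^ a) (pp : ℕ) := hzL.pow_of_coprime a hcop
    have htr := (hprim.powerBasis ℚ).trace_gen_eq_nextCoeff_minpoly
    rw [IsPrimitiveRoot.powerBasis_gen] at htr
    have hmin : minpoly ℚ (zL ^ a) = Polynomial.cyclotomic p ℚ :=
      (Polynomial.cyclotomic_eq_minpoly_rat hprim hppos).symm
    have hdeg : (Polynomial.cyclotomic p ℚ).natDegree = p - 1 := by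
      rw [Polynomial.natDegree_cyclotomic, Nat.totient_prime hp]
    haveI : Fact p.Prime := ⟨hp⟩
    rw [htr, hmin, Polynomial.nextCoeff_of_natDegree_pos (by rw [hdeg]; omega), hdeg]
    rw [Polynomial.cyclotomic_prime ℚ p, Polynomial.finset_sum_coeff]
    simp only [Polynomial.coeff_X_pow]
    rw [Finset.sum_ite_eq (Finset.range p) (p-1-1) (fun _ => (1:ℚ))]
    rw [if_pos (Finset.mem_range.mpr (by omega))]
  -- the tower ℚ ≤ K ≤ L
  have hζL : ζ ∈ L := IntermediateField.mem_adjoin_simple_self ℚ ζ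
  have hKL : ℚ⟮ζ + ζ⁻¹⟯ ≤ L := by
    rw [IntermediateField.adjoin_simple_le_iff]
    exact add_mem hζL (inv_mem hζL)
  letI : Algebra ℚ⟮ζ + ζ⁻¹⟯ L := (IntermediateField.inclusion hKL).toAlgebra
  haveI : IsScalarTower ℚ ℚ⟮ζ + ζ⁻¹⟯ L := IsScalarTower.of_algebraMap_eq' rfl
  haveI hFDL : FiniteDimensional ℚ L := IntermediateField.adjoin.finiteDimensional hint
  haveI : FiniteDimensional ℚ⟮ζ + ζ⁻¹⟯ L := FiniteDimensional.right ℚ ℚ⟮ζ + ζ⁻¹⟯ L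
  haveI : FiniteDimensional ℚ ℚ⟮ζ + ζ⁻¹⟯ := FiniteDimensional.left ℚ ℚ⟮ζ + ζ⁻¹⟯ L
  have hcoeKL : ∀ x : ℚ⟮ζ + ζ⁻¹⟯, ((algebraMap ℚ⟮ζ + ζ⁻¹⟯ L x : L) : ℂ) = (x : ℂ) := by
    intro x
    have h0 : (algebraMap ℚ⟮ζ + ζ⁻¹⟯ L x : L) = IntermediateField.inclusion hKL x := rfl
    rw [h0, IntermediateField.coe_inclusion]
  have hfrL : Module.finrank ℚ L = 2 * n := by
    rw [IsCyclotomicExtension.finrank (n := (pp : ℕ)) L (Polynomial.cyclotomic.irreducible_rat hppos)]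
    have : (pp : ℕ).totient = 2 * n := by
      simp only [hpp, PNat.mk_coe]
      rw [Nat.totient_prime hp]; omega
    exact this
  have habs : ‖ζ‖ = 1 := Complex.norm_eq_one_of_pow_eq_one hζ.pow_eq_one (by omega)
  have hconjζ : (starRingEnd ℂ) ζ = ζ⁻¹ := by
    have h1 : ζ * (starRingEnd ℂ) ζ = 1 := by
      have habs' : ‖ζ‖ = 1 := by rwa []
      rw [Complex.mul_conj, Complex.normSq_eq_norm_sq, habs']
      norm_num
    field_simp
    linear_combination h1
  have hfix : ∀ x : ℂ, x ∈ ℚ⟮ζ + ζ⁻¹⟯ → (starRingEnd ℂ) x = x := by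
    intro x hx
    induction hx using IntermediateField.adjoin_induction with
    | mem y hy =>
        rcases hy with rfl
        rw [map_add, hconjζ]
        rw [show (starRingEnd ℂ) ζ⁻¹ = (ζ⁻¹)⁻¹ by rw [map_inv₀, hconjζ], inv_inv]
        ring
    | algebraMap y => simp [Complex.conj_ofReal]
    | add x y hx hy ihx ihy => rw [map_add, ihx, ihy]
    | inv x hx ihx => rw [map_inv₀, ihx]
    | mul x y hx hy ihx ihy => rw [map_mul, ihx, ihy]
  have hζnotK : ζ ∉ ℚ⟮ζ + ζ⁻¹⟯ := by
    intro hmem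
    have h1 : ζ⁻¹ = ζ := by rw [← hconjζ, hfix ζ hmem]
    have h2 : ζ ^ 2 = 1 := by
      rw [sq]
      nth_rewrite 2 [← h1]
      exact hu
    have hd := hζ.dvd_of_pow_eq_one 2 h2
    exact absurd (Nat.le_of_dvd (by norm_num) hd) (by omega)
  have hzLnot : ∀ x : ℚ⟮ζ + ζ⁻¹⟯, algebraMap ℚ⟮ζ + ζ⁻¹⟯ L x ≠ zL := by
    intro x hx
    apply hζnotK
    have hxx : ((x : ℂ)) = ζ := by rw [← hcoeKL x, hx]; rfl
    have h2 := x.2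
    rwa [hxx] at h2
  have hz2 : zL ^ 2 = (algebraMap ℚ⟮ζ + ζ⁻¹⟯ L ξ) * zL - 1 := by
    apply Subtype.coe_injective
    have h1 : ((algebraMap ℚ⟮ζ + ζ⁻¹⟯ L ξ : L) : ℂ) = ζ + ζ⁻¹ := by rw [hcoeKL]; exact hξ
    show ((zL ^ 2 : L) : ℂ) = _
    push_cast [h1]
    show ζ ^ 2 = (ζ + ζ⁻¹) * ζ - 1
    field_simp
    ring
  set M : Submodule ℚ⟮ζ + ζ⁻¹⟯ L := Submodule.span ℚ⟮ζ + ζ⁻¹⟯ ({1, zL} : Set L) with hM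
  have h1M : (1 : L) ∈ M := Submodule.subset_span (by simp)
  have hzM : zL ∈ M := Submodule.subset_span (by simp)
  have hpow : ∀ k : ℕ, zL ^ k ∈ M := by
    have key : ∀ k : ℕ, zL ^ k ∈ M ∧ zL ^ (k+1) ∈ M := by
      intro k
      induction k with
      | zero => exact ⟨by simpa using h1M, by simpa using hzM⟩
      | succ k ih =>
          refine ⟨ih.2, ?_⟩
          have : zL ^ (k + 2) = ξ • zL ^ (k+1) - zL ^ k := by
            rw [Algebra.smul_def]
            calc zL ^ (k+2) = zL ^ 2 * zL ^ k := by ring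
            _ = ((algebraMap ℚ⟮ζ + ζ⁻¹⟯ L ξ) * zL - 1) * zL ^ k := by rw [hz2]
            _ = (algebraMap ℚ⟮ζ + ζ⁻¹⟯ L ξ) * zL ^ (k+1) - zL ^ k := by ring
          rw [this]
          exact M.sub_mem (M.smul_mem _ ih.2) ih.1
    exact fun k => (key k).1
  have htopM : ∀ x : L, x ∈ M := by
    have hadj : Algebra.adjoin ℚ ({zL} : Set L) = ⊤ :=
      IsCyclotomicExtension.adjoin_primitive_root_eq_top hzL
    intro x
    have hx : x ∈ Subalgebra.toSubmodule (Algebra.adjoin ℚ ({zL} : Set L)) := by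
      rw [hadj]; trivial
    rw [Algebra.adjoin_eq_span] at hx
    induction hx using Submodule.span_induction with
    | mem y hy =>
        obtain ⟨k, rfl⟩ := Submonoid.mem_closure_singleton.mp hy
        exact hpow k
    | zero => exact M.zero_mem
    | add a b ha hb iha ihb => exact M.add_mem iha ihb
    | smul q a ha iha =>
        rw [← IsScalarTower.algebraMap_smul ℚ⟮ζ + ζ⁻¹⟯ q a]
        exact M.smul_mem _ iha
  have hfr2 : Module.finrank ℚ⟮ζ + ζ⁻¹⟯ L = 2 := by
    have hle : Module.finrank ℚ⟮ζ + ζ⁻¹⟯ L ≤ 2 := by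
      have hspan : M = ⊤ := by rw [eq_top_iff]; exact fun x _ => htopM x
      have : Module.finrank ℚ⟮ζ + ζ⁻¹⟯ M ≤ 2 := by
        rw [hM]
        refine le_trans (finrank_span_le_card _) ?_
        simp only [Set.toFinset_insert, Set.toFinset_singleton]
        exact le_trans (Finset.card_insert_le _ _) (by simp)
      rwa [hspan, finrank_top] at this
    have hne1 : Module.finrank ℚ⟮ζ + ζ⁻¹⟯ L ≠ 1 := by
      intro h1
      have hbot : (⊥ : Subalgebra ℚ⟮ζ + ζ⁻¹⟯ L) = ⊤ :=
        Subalgebra.bot_eq_top_iff_finrank_eq_one.mpr h1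
      have : zL ∈ (⊥ : Subalgebra ℚ⟮ζ + ζ⁻¹⟯ L) := by rw [hbot]; trivial
      obtain ⟨y, hy⟩ := Algebra.mem_bot.mp this
      exact hzLnot y hy
    have hpos : 0 < Module.finrank ℚ⟮ζ + ζ⁻¹⟯ L := Module.finrank_pos
    omega
  have hfrK : Module.finrank ℚ ℚ⟮ζ + ζ⁻¹⟯ = n := by
    have := Module.finrank_mul_finrank ℚ (↥ℚ⟮ζ + ζ⁻¹⟯) (↥L)
    rw [hfr2, hfrL] at this
    omega
  have htrans : ∀ x : ℚ⟮ζ + ζ⁻¹⟯,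
      Algebra.trace ℚ L (algebraMap ℚ⟮ζ + ζ⁻¹⟯ L x) = 2 * Algebra.trace ℚ ℚ⟮ζ + ζ⁻¹⟯ x := by
    intro x
    rw [← Algebra.trace_trace (S := ℚ⟮ζ + ζ⁻¹⟯), Algebra.trace_algebraMap, hfr2]
    rw [map_nsmul]
    push_cast
    ring
  -- trace of the elements e a
  have hzLC : ((zL : L) : ℂ) = ζ := rfl
  have hTrE : ∀ a : ℕ, 1 ≤ a → a ≤ 2 * n → Algebra.trace ℚ ℚ⟮ζ + ζ⁻¹⟯ (e a) = -1 := by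
    intro a ha1 ha2
    have himg : algebraMap ℚ⟮ζ + ζ⁻¹⟯ L (e a) = zL ^ a + zL ^ (p - a) := by
      apply Subtype.coe_injective
      have h1 : ζ ^ (p - a) * ζ ^ a = 1 := by
        rw [← pow_add, show p - a + a = p by omega, hzp]
      have h2 : ζ ^ (p - a) = ζ⁻¹ ^ a := by
        linear_combination ζ⁻¹ ^ a * h1 - ζ ^ (p-a) * huk a
      show ((algebraMap ℚ⟮ζ + ζ⁻¹⟯ L (e a) : L) : ℂ) = ((zL ^ a + zL ^ (p - a) : L) : ℂ)
      rw [hcoeKL, he a ha1]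
      push_cast [hzLC, h2]
      ring
    have := htrans (e a)
    rw [himg, map_add, hTrL a ha1 ha2, hTrL (p - a) (by omega) (by omega)] at this
    linarith
  have hTrQ : ∀ q : ℚ, Algebra.trace ℚ ℚ⟮ζ + ζ⁻¹⟯ (algebraMap ℚ _ q) = n * q := by
    intro q
    rw [Algebra.trace_algebraMap, hfrK]
    push_cast
    ring
  ---------------------------------------------------------------
  -- the key product identities
  ---------------------------------------------------------------
  have hcoe2 : ((2 : ℚ⟮ζ + ζ⁻¹⟯) : ℂ) = 2 := by
    rw [show (2 : ℚ⟮ζ + ζ⁻¹⟯) = 1 + 1 by norm_num]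
    push_cast
    norm_num
  have hαC : (α : ℂ) = (1 - ζ) * (1 - ζ⁻¹) := by
    rw [hα]
    push_cast [he 1 le_rfl, hcoe2]
    linear_combination -hu
  have hA : ∀ i : Fin n, (1 - ζ) * (f i : ℂ) = ζ ^ ((i : ℕ)+1) - ζ⁻¹ ^ (i : ℕ) := by
    intro i
    rw [hfC i]
    exact telescope n ζ ζ⁻¹ hu hzp' i (by omega)
  have hB : ∀ l : Fin n, (1 - ζ⁻¹) * (f l : ℂ) = ζ⁻¹ ^ ((l : ℕ)+1) - ζ ^ (l : ℕ) := by
    intro l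
    rw [hfC l]
    have h1 : ∑ j ∈ Finset.Icc ((l : ℕ) + 1) n, (ζ ^ j + ζ⁻¹ ^ j)
        = ∑ j ∈ Finset.Icc ((l : ℕ) + 1) n, (ζ⁻¹ ^ j + ζ ^ j) :=
      Finset.sum_congr rfl fun j _ => add_comm _ _
    rw [h1]
    refine telescope n ζ⁻¹ ζ (by rw [mul_comm]; exact hu) ?_ l (by omega)
    rw [inv_pow, hzp', inv_one]
  have hprodC : ∀ i l : Fin n, ((α * f i * f l : ℚ⟮ζ + ζ⁻¹⟯) : ℂ)
      = (ζ ^ ((i : ℕ)+1) - ζ⁻¹ ^ (i : ℕ)) * (ζ⁻¹ ^ ((l : ℕ)+1) - ζ ^ (l : ℕ)) := by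
    intro i l
    push_cast
    rw [← hA i, ← hB l, hαC]
    ring
  -- diagonal identity
  have hdiag : ∀ i : Fin n, α * f i * f i = 2 - e (2 * (i : ℕ) + 1) := by
    intro i
    apply coeinj
    rw [hprodC i i]
    push_cast [he (2 * (i : ℕ) + 1) (by omega), hcoe2]
    field_simp
    linear_combination (ζ ^ (i : ℕ) * ζ⁻¹ ^ (i : ℕ)) * hu + 2 * huk (i : ℕ)
  -- off-diagonal identity
  have hoff : ∀ i l : Fin n, (l : ℕ) < (i : ℕ) →
      α * f i * f l = e ((i : ℕ) - (l : ℕ)) - e ((i : ℕ) + (l : ℕ) + 1) := by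
    intro i l hli
    apply coeinj
    rw [hprodC i l]
    obtain ⟨d, hd⟩ : ∃ d : ℕ, (i : ℕ) = (l : ℕ) + (d + 1) := ⟨(i : ℕ) - (l : ℕ) - 1, by omega⟩
    push_cast [he ((i : ℕ) - (l : ℕ)) (by omega), he ((i : ℕ) + (l : ℕ) + 1) (by omega)]
    rw [show (i : ℕ) - (l : ℕ) = d + 1 by omega, hd]
    field_simp
    linear_combination ζ * ζ ^ d * (ζ ^ (l : ℕ) * ζ⁻¹ ^ (l : ℕ)) * hu + (ζ * ζ ^ d + ζ⁻¹ * ζ⁻¹ ^ d) * huk (l : ℕ)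
  ---------------------------------------------------------------
  -- Part 3 : the trace values
  ---------------------------------------------------------------
  have htwo : (2 : ℚ⟮ζ + ζ⁻¹⟯) = algebraMap ℚ _ 2 := by norm_num
  have part3 : ∀ i l : Fin n, Algebra.trace ℚ ℚ⟮ζ + ζ⁻¹⟯ (α * f i * f l) =
      if i = l then (p : ℚ) else 0 := by
    have key : ∀ i l : Fin n, (l : ℕ) ≤ (i : ℕ) →
        Algebra.trace ℚ ℚ⟮ζ + ζ⁻¹⟯ (α * f i * f l) = if i = l then (p : ℚ) else 0 := by
      intro i l hle
      rcases eq_or_lt_of_le hle with heq | hlt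
      · have hil : i = l := Fin.ext heq.symm
        subst hil
        rw [if_pos rfl, hdiag i, map_sub, htwo, hTrQ,
          hTrE (2 * (i : ℕ) + 1) (by omega) (by omega)]
        have : ((p : ℚ)) = 2 * n + 1 := by exact_mod_cast congrArg (Nat.cast : ℕ → ℚ) hn
        rw [this]; ring
      · have hil : i ≠ l := by
          intro h; rw [h] at hlt; omega
        rw [if_neg hil, hoff i l hlt, map_sub,
          hTrE ((i : ℕ) - (l : ℕ)) (by omega) (by omega),
          hTrE ((i : ℕ) + (l : ℕ) + 1) (by omega) (by omega)]
        ring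
    intro i l
    rcases le_or_gt (l : ℕ) (i : ℕ) with h | h
    · exact key i l h
    · have h1 : α * f i * f l = α * f l * f i := by ring
      rw [h1, key l i (le_of_lt h)]
      by_cases h2 : i = l
      · rw [if_pos h2, if_pos h2.symm]
      · rw [if_neg h2, if_neg (fun hh => h2 hh.symm)]
  ---------------------------------------------------------------
  -- Part 1 : linear independence
  ---------------------------------------------------------------
  have part1 : LinearIndependent ℤ f := by
    rw [Fintype.linearIndependent_iff]
    intro g hg l
    have h0 : α * (∑ i, g i • f i) * f l = ∑ i, g i • (α * f i * f l) := by
      rw [Finset.mul_sum, Finset.sum_mul]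
      exact Finset.sum_congr rfl fun i _ => by rw [mul_smul_comm, smul_mul_assoc]
    have h1 : Algebra.trace ℚ ℚ⟮ζ + ζ⁻¹⟯ (α * (∑ i, g i • f i) * f l) = 0 := by
      rw [hg, mul_zero, zero_mul, map_zero]
    rw [h0, map_sum] at h1
    have h2 : ∀ i : Fin n, Algebra.trace ℚ ℚ⟮ζ + ζ⁻¹⟯ (g i • (α * f i * f l))
        = if i = l then (g i : ℚ) * p else 0 := by
      intro i
      rw [map_zsmul, part3 i l]
      split
      · rw [zsmul_eq_mul]
      · rw [smul_zero]
    rw [Finset.sum_congr rfl fun i _ => h2 i] at h1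
    rw [Finset.sum_ite_eq' Finset.univ l (fun i => (g i : ℚ) * p)] at h1
    rw [if_pos (Finset.mem_univ l)] at h1
    have hp0 : (p : ℚ) ≠ 0 := by exact_mod_cast (by omega : p ≠ 0)
    have : (g l : ℚ) = 0 := by
      rcases mul_eq_zero.mp h1 with h | h
      · exact h
      · exact absurd h hp0
    exact_mod_cast this
  ---------------------------------------------------------------
  -- Part 2 : the span equals ℤ[ξ]
  ---------------------------------------------------------------
  have he1 : e 1 = ξ := by
    apply coeinj; rw [he 1 le_rfl, hξ]; ring
  have hrec1 : ξ * e 1 = e 2 + 2 := by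
    apply coeinj
    push_cast [he 1 le_rfl, he 2 (by omega), hξ]
    field_simp
    ring_nf
    norm_cast
  have hrec2 : ∀ m : ℕ, ξ * e (m+2) = e (m+3) + e (m+1) := by
    intro m
    apply coeinj
    push_cast [he _ (by omega : 1 ≤ m+2), he _ (by omega : 1 ≤ m+3), he _ (by omega : 1 ≤ m+1), hξ]
    field_simp
    linear_combination ζ⁻¹ ^ m * (ζ * ζ⁻¹ - ζ⁻¹ ^ 2) * hu
  have h1n : ζ ^ (n+1) = ζ⁻¹ ^ n := by
      calc ζ^(n+1) = ζ^(n+1) * (ζ^n * ζ⁻¹^n) := by rw [← mul_pow, hu, one_pow, mul_one]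
      _ = (ζ^(2*n+1)) * ζ⁻¹^n := by ring
      _ = ζ⁻¹^n := by rw [hzp', one_mul]
  have h2n : ζ⁻¹ ^ (n+1) = ζ ^ n := by
      have h3 := huk (n+1)
      rw [h1n] at h3
      linear_combination ζ^n * h3 - ζ⁻¹^(n+1) * huk n
  have hen1 : e (n+1) = e n := by
    apply coeinj
    rw [he _ (by omega : 1 ≤ n+1), he _ (by omega : 1 ≤ n), h1n, h2n]; ring
  -- e j lies in ℤ[ξ]
  have hadjE : ∀ j : ℕ, 1 ≤ j → e j ∈ Algebra.adjoin ℤ ({ξ} : Set ℚ⟮ζ + ζ⁻¹⟯) := by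
    have hξmem : ξ ∈ Algebra.adjoin ℤ ({ξ} : Set ℚ⟮ζ + ζ⁻¹⟯) :=
      Algebra.subset_adjoin (Set.mem_singleton ξ)
    have key : ∀ j : ℕ, e (j+1) ∈ Algebra.adjoin ℤ ({ξ} : Set ℚ⟮ζ + ζ⁻¹⟯) ∧
        e (j+2) ∈ Algebra.adjoin ℤ ({ξ} : Set ℚ⟮ζ + ζ⁻¹⟯) := by
      intro j
      induction j with
      | zero =>
          constructor
          · rw [he1]; exact hξmem
          · have h2 : e 2 = ξ * ξ - 2 := by linear_combination -hrec1 + ξ * he1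
            rw [h2]
            have h2mem : (2 : ℚ⟮ζ + ζ⁻¹⟯) ∈ Algebra.adjoin ℤ ({ξ} : Set ℚ⟮ζ + ζ⁻¹⟯) := by
              rw [show (2 : ℚ⟮ζ + ζ⁻¹⟯) = 1 + 1 by norm_num]
              exact Subalgebra.add_mem _ (Subalgebra.one_mem _) (Subalgebra.one_mem _)
            exact Subalgebra.sub_mem _ (Subalgebra.mul_mem _ hξmem hξmem) h2mem
      | succ j ih =>
          refine ⟨ih.2, ?_⟩
          have h3 : e (j+3) = ξ * e (j+2) - e (j+1) := by linear_combination -hrec2 j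
          rw [h3]
          exact Subalgebra.sub_mem _ (Subalgebra.mul_mem _ hξmem ih.2) ih.1
    intro j hj
    obtain ⟨m, rfl⟩ : ∃ m, j = m + 1 := ⟨j - 1, by omega⟩
    exact (key m).1
  -- the span of f
  set N : Submodule ℤ ℚ⟮ζ + ζ⁻¹⟯ := Submodule.span ℤ (Set.range f) with hN
  have hfN : ∀ k : Fin n, f k ∈ N := fun k => Submodule.subset_span ⟨k, rfl⟩
  have heN : ∀ j : ℕ, 1 ≤ j → j ≤ n → e j ∈ N := by
    intro j hj1 hjn
    rcases eq_or_lt_of_le hjn with heq | hlt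
    · -- j = n : e n = f (n-1)
      have hfn : f ⟨n-1, by omega⟩ = e n := by
        rw [hf ⟨n-1, by omega⟩]
        have : (⟨n-1, by omega⟩ : Fin n).1 + 1 = n := by simp; omega
        rw [this, Finset.Icc_self, Finset.sum_singleton]
      rw [heq, ← hfn]
      exact hfN _
    · -- j < n : e j = f (j-1) - f j
      have hstep : f ⟨j-1, by omega⟩ = e j + f ⟨j, hlt⟩ := by
        rw [hf ⟨j-1, by omega⟩, hf ⟨j, hlt⟩]
        have h4 : (⟨j-1, by omega⟩ : Fin n).1 + 1 = j := by simp; omega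
        rw [h4]
        have h5 : Finset.Icc j n = insert j (Finset.Icc (j+1) n) := by
          ext x
          simp only [Finset.mem_Icc, Finset.mem_insert]
          omega
        rw [h5, Finset.sum_insert (by simp)]
      have : e j = f ⟨j-1, by omega⟩ - f ⟨j, hlt⟩ := by rw [hstep]; ring
      rw [this]
      exact N.sub_mem (hfN _) (hfN _)
  have h1C : (f ⟨0, by omega⟩ : ℂ) = -1 := by
    have h := telescope n ζ ζ⁻¹ hu hzp' 0 (by omega)
    rw [pow_one, pow_zero] at h
    have h6 : (1 - ζ) * ((f ⟨0, by omega⟩ : ℂ) + 1) = 0 := by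
      rw [hfC ⟨0, by omega⟩]
      simp only [Fin.val_mk, zero_add]
      rw [mul_add, h]
      ring
    rcases mul_eq_zero.mp h6 with h7 | h7
    · exact absurd (by linear_combination -h7) hζ1
    · linear_combination h7
  have h1K : (1 : ℚ⟮ζ + ζ⁻¹⟯) = - f ⟨0, by omega⟩ := by
    apply coeinj
    push_cast [h1C]
    ring
  have h1N : (1 : ℚ⟮ζ + ζ⁻¹⟯) ∈ N := by
    rw [h1K]; exact N.neg_mem (hfN _)
  have h2N : (2 : ℚ⟮ζ + ζ⁻¹⟯) ∈ N := by
    have : (2 : ℚ⟮ζ + ζ⁻¹⟯) = (2 : ℤ) • (1 : ℚ⟮ζ + ζ⁻¹⟯) := by norm_num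
    rw [this]; exact N.smul_mem _ h1N
  -- N is stable under multiplication by ξ
  have hmulE : ∀ j : ℕ, 1 ≤ j → j ≤ n → ξ * e j ∈ N := by
    intro j hj1 hjn
    rcases eq_or_lt_of_le hjn with heq | hlt
    · -- j = n
      have := hrec2 (n-2)
      rw [show n-2+2 = n by omega, show n-2+3 = n+1 by omega, show n-2+1 = n-1 by omega] at this
      rw [heq, this, hen1]
      exact N.add_mem (heN n (by omega) le_rfl) (heN (n-1) (by omega) (by omega))
    · rcases Nat.lt_or_ge j 2 with hj2 | hj2
      · -- j = 1
        have hj1' : j = 1 := by omega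
        rw [hj1', hrec1]
        exact N.add_mem (heN 2 (by omega) (by omega)) h2N
      · -- 2 ≤ j < n
        have := hrec2 (j-2)
        rw [show j-2+2 = j by omega, show j-2+3 = j+1 by omega, show j-2+1 = j-1 by omega] at this
        rw [this]
        exact N.add_mem (heN (j+1) (by omega) (by omega)) (heN (j-1) (by omega) (by omega))
  have hmulN : ∀ x ∈ N, ξ * x ∈ N := by
    intro x hx
    induction hx using Submodule.span_induction with
    | mem y hy =>
        obtain ⟨k, rfl⟩ := hy
        rw [hf k, Finset.mul_sum]
        refine Submodule.sum_mem N fun j hj => ?_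
        simp only [Finset.mem_Icc] at hj
        exact hmulE j (by omega) hj.2
    | zero => rw [mul_zero]; exact N.zero_mem
    | add a b ha hb iha ihb => rw [mul_add]; exact N.add_mem iha ihb
    | smul z a ha iha =>
        rw [mul_smul_comm]
        exact N.smul_mem z iha
  have hpowN : ∀ k : ℕ, ξ ^ k ∈ N := by
    intro k
    induction k with
    | zero => simpa using h1N
    | succ k ih =>
        rw [pow_succ, mul_comm]
        exact hmulN _ ih
  have part2 : Submodule.span ℤ (Set.range f) =
      Subalgebra.toSubmodule (Algebra.adjoin ℤ ({ξ} : Set ℚ⟮ζ + ζ⁻¹⟯)) := by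
    apply le_antisymm
    · rw [Submodule.span_le]
      rintro x ⟨k, rfl⟩
      show f k ∈ Algebra.adjoin ℤ ({ξ} : Set ℚ⟮ζ + ζ⁻¹⟯)
      rw [hf k]
      refine Subalgebra.sum_mem _ fun j hj => ?_
      simp only [Finset.mem_Icc] at hj
      exact hadjE j (by omega)
    · intro x hx
      rw [Algebra.adjoin_eq_span] at hx
      induction hx using Submodule.span_induction with
      | mem y hy =>
          obtain ⟨k, rfl⟩ := Submonoid.mem_closure_singleton.mp hy
          exact hpowN k
      | zero => exact N.zero_mem
      | add a b ha hb iha ihb => exact N.add_mem iha ihb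
      | smul z a ha iha => exact N.smul_mem z iha
  exact ⟨part1, part2, part3⟩
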